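/- Let Δ be a finite set with |Δ| = m ≥ 4, let r ≥ 1, let H be a transitive subgroup of Sym({1,…,r}), and let Γ be a digraph with vertex set Δ^r. Then every permutation of Δ^r in product-action form with base entries in Alt(Δ) and top element in H is an automorphism of Γ if and only if there exists an H-invariant set 𝒥 ⊆ {0,1}^r such that for all u, v ∈ Δ^r, (u,v) is an arc of Γ exactly when the pattern (ε_1,…,ε_r) ∈ 𝒥, where ε_i = 0 if u_i = v_i and ε_i = 1 if u_i ≠ v_i. In other words, the digraphs on Δ^r invariant under Alt(Δ) ≀ H in product action are precisely the generalised Hamming graphs H(r,m,𝒥) with 𝒥 an H-invariant subset of {0,1}^r. -/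

import Mathlib

/-- The permutation of Δ^r in product-action form with base k = (k_1,…,k_r) ∈ Sym(Δ)^r and
top h ∈ Sym({1,…,r}): it sends u to the tuple whose i-th entry is k_i(u_{h⁻¹(i)}). -/
def paPerm {Δ : Type*} {r : ℕ} (k : Fin r → Equiv.Perm Δ) (h : Equiv.Perm (Fin r)) :
    Equiv.Perm (Fin r → Δ) where
  toFun u i := k i (u (h⁻¹ i))
  invFun u i := (k (h i))⁻¹ (u (h i))
  left_inv u := by funext i; simp
  right_inv u := by funext i; simp

/-- Two-transitivity of the alternating group on ≥ 4 points, pattern version. -/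
lemma alt_two_trans {Δ : Type*} [Fintype Δ] [DecidableEq Δ] (hm : 4 ≤ Fintype.card Δ)
    (a b c d : Δ) (hpat : a = b ↔ c = d) :
    ∃ k : Equiv.Perm Δ, k ∈ alternatingGroup Δ ∧ k a = c ∧ k b = d := by
  -- find e ≠ f both avoiding c and d
  obtain ⟨e, f, hef, hec, hed, hfc, hfd⟩ :
      ∃ e f : Δ, e ≠ f ∧ e ≠ c ∧ e ≠ d ∧ f ≠ c ∧ f ≠ d := by
    have hcard : 1 < (({c, d}ᶜ : Finset Δ)).card := by
      have h2 : ({c, d} : Finset Δ).card ≤ 2 := by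
        apply le_trans (Finset.card_insert_le _ _); simp
      have := Finset.card_compl ({c, d} : Finset Δ)
      omega
    obtain ⟨e, he, f, hf, hef⟩ := Finset.one_lt_card.mp hcard
    simp only [Finset.mem_compl, Finset.mem_insert, Finset.mem_singleton, not_or] at he hf
    exact ⟨e, f, hef, he.1, he.2, hf.1, hf.2⟩
  -- build some permutation g with g a = c, g b = d
  obtain ⟨g, hga, hgb⟩ : ∃ g : Equiv.Perm Δ, g a = c ∧ g b = d := by
    by_cases hab : a = b
    · have hcd : c = d := hpat.mp hab
      exact ⟨Equiv.swap a c, Equiv.swap_apply_left a c, by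
        rw [← hab, ← hcd]; exact Equiv.swap_apply_left a c⟩
    · have hcd : c ≠ d := fun h => hab (hpat.mpr h)
      refine ⟨Equiv.swap (Equiv.swap a c b) d * Equiv.swap a c, ?_, ?_⟩
      · simp only [Equiv.Perm.mul_apply, Equiv.swap_apply_left]
        apply Equiv.swap_apply_of_ne_of_ne
        · intro h
          apply hab
          have := congrArg (Equiv.swap a c) h.symm
          simpa using this.symm
        · exact hcd
      · simp only [Equiv.Perm.mul_apply, Equiv.swap_apply_left]
  by_cases hg : Equiv.Perm.sign g = 1
  · exact ⟨g, Equiv.Perm.mem_alternatingGroup.mpr hg, hga, hgb⟩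
  · refine ⟨Equiv.swap e f * g, ?_, ?_, ?_⟩
    · rw [Equiv.Perm.mem_alternatingGroup]
      have hsg : Equiv.Perm.sign g = -1 := by
        rcases Int.units_eq_one_or (Equiv.Perm.sign g) with h | h
        · exact absurd h hg
        · exact h
      simp [Equiv.Perm.sign_swap hef, hsg]
    · simp only [Equiv.Perm.mul_apply, hga]
      exact Equiv.swap_apply_of_ne_of_ne (Ne.symm hec) (Ne.symm hfc)
    · simp only [Equiv.Perm.mul_apply, hgb]
      exact Equiv.swap_apply_of_ne_of_ne (Ne.symm hed) (Ne.symm hfd)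

/-- Let Δ be a finite set with |Δ| = m ≥ 4, let r ≥ 1, let H be a transitive
subgroup of Sym({1,…,r}), and let Γ be a digraph with vertex set Δ^r (arc relation A).
Then every permutation of Δ^r in product-action form with base entries in Alt(Δ) and top
element in H is an automorphism of Γ if and only if there exists an H-invariant set
𝒥 ⊆ {0,1}^r such that for all u, v ∈ Δ^r, (u,v) is an arc of Γ exactly when the pattern
(ε_1,…,ε_r) ∈ 𝒥, where ε_i records whether u_i ≠ v_i. In other words, the digraphs on Δ^r
invariant under Alt(Δ) ≀ H in product action are precisely the generalised Hamming graphs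
H(r,m,𝒥) with 𝒥 an H-invariant subset of {0,1}^r. -/
theorem stmt_11 {Δ : Type*} [Fintype Δ] [DecidableEq Δ] (hm : 4 ≤ Fintype.card Δ)
    (r : ℕ) (hr : 1 ≤ r) (H : Subgroup (Equiv.Perm (Fin r)))
    (hH : ∀ i j : Fin r, ∃ h ∈ H, h i = j)
    (A : (Fin r → Δ) → (Fin r → Δ) → Prop) :
    (∀ (k : Fin r → Equiv.Perm Δ) (h : Equiv.Perm (Fin r)),
        (∀ i, k i ∈ alternatingGroup Δ) → h ∈ H →
        ∀ u v, A u v ↔ A (paPerm k h u) (paPerm k h v))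
      ↔ ∃ J : Set (Fin r → Bool),
          (∀ j ∈ J, ∀ h ∈ H, (fun i => j (h⁻¹ i)) ∈ J) ∧
          (∀ u v, A u v ↔ (fun i => decide (u i ≠ v i)) ∈ J) := by
  -- two distinct points of Δ
  obtain ⟨a, b, hab⟩ : ∃ a b : Δ, a ≠ b := by
    have : 1 < Fintype.card Δ := by omega
    obtain ⟨a, b, h⟩ := Fintype.exists_pair_of_one_lt_card this
    exact ⟨a, b, h⟩
  constructor
  · intro hyp
    -- bridge: A depends only on the pattern
    have bridge : ∀ u v u' v' : Fin r → Δ,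
        (∀ i, (u i = v i ↔ u' i = v' i)) → (A u v ↔ A u' v') := by
      intro u v u' v' hp
      choose k hk hk1 hk2 using fun i => alt_two_trans hm (u i) (v i) (u' i) (v' i) (hp i)
      have h1 : paPerm k 1 u = u' := by
        funext i; simp [paPerm, hk1]
      have h2 : paPerm k 1 v = v' := by
        funext i; simp [paPerm, hk2]
      have := hyp k 1 hk H.one_mem u v
      rwa [h1, h2] at this
    -- canonical representative of a pattern
    set U : (Fin r → Bool) → (Fin r → Δ) := fun _ _ => a with hU
    set V : (Fin r → Bool) → (Fin r → Δ) := fun j i => if j i then b else a with hV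
    have hpatUV : ∀ j i, (U j i = V j i ↔ j i = false) := by
      intro j i
      simp only [hU, hV]
      cases hji : j i <;> simp [hab]
    refine ⟨{j | A (U j) (V j)}, ?_, ?_⟩
    · intro j hj h hh
      have step := hyp (fun _ => 1) h (fun _ => alternatingGroup Δ |>.one_mem) hh (U j) (V j)
      have := step.mp hj
      have hb : A (paPerm (fun _ => 1) h (U j)) (paPerm (fun _ => 1) h (V j))
          ↔ A (U fun i => j (h⁻¹ i)) (V fun i => j (h⁻¹ i)) := by
        apply bridge
        intro i
        simp only [paPerm, Equiv.coe_fn_mk, Equiv.Perm.one_apply, hU, hV]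
      exact hb.mp this
    · intro u v
      set j : Fin r → Bool := fun i => decide (u i ≠ v i) with hj
      have : A u v ↔ A (U j) (V j) := by
        apply bridge
        intro i
        rw [hpatUV j i, hj]
        cases huv : decide (u i ≠ v i) <;> simp_all
      exact this
  · rintro ⟨J, hJinv, hJ⟩ k h hk hh u v
    rw [hJ u v, hJ (paPerm k h u) (paPerm k h v)]
    have hpat : (fun i => decide (paPerm k h u i ≠ paPerm k h v i))
        = fun i => (fun i' => decide (u i' ≠ v i')) (h⁻¹ i) := by
      funext i
      simp only [paPerm, Equiv.coe_fn_mk]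
      exact decide_eq_decide.mpr (by simp)
    constructor
    · intro hmem
      rw [hpat]
      exact hJinv _ hmem h hh
    · intro hmem
      rw [hpat] at hmem
      have := hJinv _ hmem h⁻¹ (H.inv_mem hh)
      simpa using this
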